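/- Let d ≥ 1, let D ⊆ ℝ^d be open, let K₀ be a bounded function on D², and define K_t(x,y) := K₀(x,y) + ∫_0^t κ(e^u|x−y|) du for t ≥ 0 and x,y ∈ D. Then for every compact set 𝒦 ⊂ D there exists a constant C > 0 such that for all t ≥ 0 and all x, y ∈ 𝒦: | K_t(x,y) − log( 1 / ( |x−y| ∨ e^{−t} ) ) | ≤ C, where a ∨ b denotes max(a,b). -/

import Mathlib

open MeasureTheory Filter

noncomputable section

abbrev Ed (d : ℕ) := EuclideanSpace ℝ (Fin d)

/-- Positive definite kernel on an open set `U ⊆ ℝ^d`. -/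
def PosDefKernel (d : ℕ) (U : Set (Ed d)) (G : Ed d → Ed d → ℝ) : Prop :=
  ∀ ρ : Ed d → ℝ, Continuous ρ → HasCompactSupport ρ → tsupport ρ ⊆ U →
    0 ≤ ∫ x in U, ∫ y in U, G x y * ρ x * ρ y

lemma kcont (κ : ℝ → ℝ) (c : NNReal) (hlip : LipschitzOnWith c κ (Set.Ici 0))
    {r : ℝ} (hr : 0 ≤ r) : Continuous fun u => κ (Real.exp u * r) := by
  rw [← continuousOn_univ]
  exact hlip.continuousOn.comp ((Real.continuous_exp.mul continuous_const).continuousOn)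
    (fun u _ => mul_nonneg (Real.exp_pos u).le hr)

lemma partA (κ : ℝ → ℝ) (c : NNReal) (hlip : LipschitzOnWith c κ (Set.Ici 0))
    (hκ0 : κ 0 = 1) {r t : ℝ} (hr : 0 ≤ r) (ht : 0 ≤ t)
    (hrt : Real.exp t * r ≤ 1) :
    |(∫ u in (0:ℝ)..t, κ (Real.exp u * r)) - t| ≤ c := by
  have hcont := kcont κ c hlip hr
  have hint : IntervalIntegrable (fun u => κ (Real.exp u * r)) volume 0 t :=
    hcont.intervalIntegrable 0 t
  have h1 : (∫ u in (0:ℝ)..t, κ (Real.exp u * r)) - t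
      = ∫ u in (0:ℝ)..t, (κ (Real.exp u * r) - 1) := by
    rw [intervalIntegral.integral_sub hint intervalIntegrable_const,
      intervalIntegral.integral_const]
    simp
  rw [h1]
  have hptb : ∀ u ∈ Set.Icc (0:ℝ) t, |κ (Real.exp u * r) - 1| ≤ c * (Real.exp u * r) := by
    intro u hu
    have := hlip.dist_le_mul (Real.exp u * r) (Set.mem_Ici.mpr (mul_nonneg (Real.exp_pos u).le hr)) 0 (Set.mem_Ici.mpr le_rfl)
    simpa [Real.dist_eq, hκ0, abs_of_nonneg hr, abs_of_nonneg (mul_nonneg (Real.exp_pos u).le hr)] using this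
  have habs : |∫ u in (0:ℝ)..t, (κ (Real.exp u * r) - 1)|
      ≤ ∫ u in (0:ℝ)..t, |κ (Real.exp u * r) - 1| :=
    intervalIntegral.abs_integral_le_integral_abs ht
  have hint2 : IntervalIntegrable (fun u => |κ (Real.exp u * r) - 1|) volume 0 t :=
    ((hcont.sub continuous_const).abs).intervalIntegrable 0 t
  have hint3 : IntervalIntegrable (fun u => (c:ℝ) * (Real.exp u * r)) volume 0 t :=
    (continuous_const.mul (Real.continuous_exp.mul continuous_const)).intervalIntegrable 0 t
  have hmono : (∫ u in (0:ℝ)..t, |κ (Real.exp u * r) - 1|)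
      ≤ ∫ u in (0:ℝ)..t, (c:ℝ) * (Real.exp u * r) :=
    intervalIntegral.integral_mono_on ht hint2 hint3 hptb
  have hcomp : (∫ u in (0:ℝ)..t, (c:ℝ) * (Real.exp u * r)) = (c:ℝ) * r * (Real.exp t - 1) := by
    have : ∀ u : ℝ, (c:ℝ) * (Real.exp u * r) = ((c:ℝ) * r) * Real.exp u := by
      intro u; ring
    simp only [this]
    rw [intervalIntegral.integral_const_mul, integral_exp]
    simp
  have hfin : (c:ℝ) * r * (Real.exp t - 1) ≤ c := by
    have h2 : (c:ℝ) * r * (Real.exp t - 1) = (c:ℝ) * (Real.exp t * r) - (c:ℝ) * r := by ring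
    rw [h2]
    have : (c:ℝ) * (Real.exp t * r) ≤ (c:ℝ) * 1 := by
      apply mul_le_mul_of_nonneg_left hrt c.coe_nonneg
    nlinarith [mul_nonneg c.coe_nonneg hr]
  calc |∫ u in (0:ℝ)..t, (κ (Real.exp u * r) - 1)| ≤ _ := habs
    _ ≤ _ := hmono
    _ = _ := hcomp
    _ ≤ _ := hfin

lemma partB (κ : ℝ → ℝ) (c : NNReal) (hlip : LipschitzOnWith c κ (Set.Ici 0))
    (hκ0 : κ 0 = 1) (hκ1 : ∀ r : ℝ, 1 ≤ r → κ r = 0)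
    {r t : ℝ} (hr : 0 < r) (ht : 0 ≤ t) :
    |(∫ u in (0:ℝ)..t, κ (Real.exp u * r)) - min t (-Real.log r)| ≤ c + max 0 (Real.log r) := by
  rcases le_or_gt 1 r with h1 | h1
  · -- r ≥ 1 : integral is 0, min = -log r
    have hlr : 0 ≤ Real.log r := Real.log_nonneg h1
    have hz : (∫ u in (0:ℝ)..t, κ (Real.exp u * r)) = 0 := by
      rw [intervalIntegral.integral_congr (g := fun _ => (0:ℝ)) ?_]
      · simp
      · intro u hu
        rw [Set.uIcc_of_le ht] at hu
        exact hκ1 _ (one_le_mul_of_one_le_of_one_le (Real.one_le_exp hu.1) h1)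
    have hmin : min t (-Real.log r) = -Real.log r :=
      min_eq_right (by linarith)
    rw [hz, hmin]
    have : |0 - -Real.log r| = Real.log r := by
      rw [abs_of_nonneg] <;> simp [hlr]
    rw [this]
    have : Real.log r ≤ max 0 (Real.log r) := le_max_right _ _
    linarith [c.coe_nonneg]
  · -- r < 1
    set t₀ := -Real.log r with ht₀def
    have ht₀ : 0 ≤ t₀ := by
      have := Real.log_nonpos hr.le h1.le
      simp only [ht₀def]; linarith
    have hexp : Real.exp t₀ * r = 1 := by
      rw [ht₀def, Real.exp_neg, Real.exp_log hr]
      field_simp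
    have key : |(∫ u in (0:ℝ)..t, κ (Real.exp u * r)) - min t t₀| ≤ c := by
      rcases le_or_gt t t₀ with h2 | h2
      · rw [min_eq_left h2]
        apply partA κ c hlip hκ0 hr.le ht
        calc Real.exp t * r ≤ Real.exp t₀ * r :=
              mul_le_mul_of_nonneg_right (Real.exp_le_exp.mpr h2) hr.le
          _ = 1 := hexp
      · rw [min_eq_right h2.le]
        have hintf : ∀ a b : ℝ, IntervalIntegrable (fun u => κ (Real.exp u * r)) volume a b :=
          fun a b => (kcont κ c hlip hr.le).intervalIntegrable a b
        have hsplit : (∫ u in (0:ℝ)..t, κ (Real.exp u * r))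
            = (∫ u in (0:ℝ)..t₀, κ (Real.exp u * r)) + ∫ u in t₀..t, κ (Real.exp u * r) :=
          (intervalIntegral.integral_add_adjacent_intervals (hintf 0 t₀) (hintf t₀ t)).symm
        have hzero : (∫ u in t₀..t, κ (Real.exp u * r)) = 0 := by
          rw [intervalIntegral.integral_congr (g := fun _ => (0:ℝ)) ?_]
          · simp
          · intro u hu
            rw [Set.uIcc_of_le h2.le] at hu
            apply hκ1
            calc (1:ℝ) = Real.exp t₀ * r := hexp.symm
              _ ≤ Real.exp u * r :=
                mul_le_mul_of_nonneg_right (Real.exp_le_exp.mpr hu.1) hr.le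
        rw [hsplit, hzero, add_zero]
        exact partA κ c hlip hκ0 hr.le ht₀ (le_of_eq hexp)
    calc |(∫ u in (0:ℝ)..t, κ (Real.exp u * r)) - min t t₀| ≤ c := key
      _ ≤ c + max 0 (Real.log r) := le_add_of_nonneg_right (le_max_left _ _)


theorem statement5
    (d : ℕ) (hd : 1 ≤ d)
    (κ : ℝ → ℝ) (hκlip : ∃ c : NNReal, LipschitzOnWith c κ (Set.Ici 0))
    (hκnn : ∀ r : ℝ, 0 ≤ r → 0 ≤ κ r) (hκ0 : κ 0 = 1)
    (hκ1 : ∀ r : ℝ, 1 ≤ r → κ r = 0)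
    (hκpd : PosDefKernel d Set.univ (fun x y => κ ‖x - y‖))
    (D : Set (Ed d)) (hD : IsOpen D)
    (K₀ : Ed d → Ed d → ℝ) (M : ℝ)
    (hK₀bdd : ∀ x ∈ D, ∀ y ∈ D, |K₀ x y| ≤ M)
    (𝒦 : Set (Ed d)) (h𝒦c : IsCompact 𝒦) (h𝒦D : 𝒦 ⊆ D) :
    ∃ C : ℝ, 0 < C ∧ ∀ t : ℝ, 0 ≤ t → ∀ x ∈ 𝒦, ∀ y ∈ 𝒦,
      |(K₀ x y + ∫ u in (0:ℝ)..t, κ (Real.exp u * ‖x - y‖)) -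
          Real.log (1 / max ‖x - y‖ (Real.exp (-t)))| ≤ C := by
  obtain ⟨c, hlip⟩ := hκlip
  obtain ⟨R, hR⟩ := Metric.isBounded_iff.mp h𝒦c.isBounded
  refine ⟨|M| + c + max 0 (Real.log R) + 1, by positivity, ?_⟩
  intro t ht x hx y hy
  set r := ‖x - y‖ with hrdef
  have hrnn : 0 ≤ r := norm_nonneg _
  have hrR : r ≤ R := by
    have := hR hx hy
    rwa [dist_eq_norm] at this
  have hK : |K₀ x y| ≤ |M| := le_trans (hK₀bdd x (h𝒦D hx) y (h𝒦D hy)) (le_abs_self M)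
  rcases eq_or_lt_of_le hrnn with h0 | h0
  · -- r = 0
    have hI : (∫ u in (0:ℝ)..t, κ (Real.exp u * r)) = t := by
      have : ∀ u : ℝ, κ (Real.exp u * r) = 1 := by
        intro u; rw [← h0, mul_zero, hκ0]
      simp only [this, intervalIntegral.integral_const, smul_eq_mul, mul_one, sub_zero]
    have hT : Real.log (1 / max r (Real.exp (-t))) = t := by
      rw [← h0, max_eq_right (Real.exp_pos _).le, one_div, Real.log_inv, Real.log_exp]
      ring
    rw [hI, hT]
    have : |K₀ x y + t - t| = |K₀ x y| := by ring_nf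
    rw [this]
    have := c.coe_nonneg
    have := le_max_left (0:ℝ) (Real.log R)
    linarith
  · -- r > 0
    have hT : Real.log (1 / max r (Real.exp (-t))) = min t (-Real.log r) := by
      rw [one_div, Real.log_inv]
      rcases le_total r (Real.exp (-t)) with h2 | h2
      · rw [max_eq_right h2, Real.log_exp, min_eq_left, neg_neg]
        have : Real.log r ≤ Real.log (Real.exp (-t)) := Real.log_le_log h0 h2
        rw [Real.log_exp] at this
        linarith
      · rw [max_eq_left h2, min_eq_right]
        have : Real.log (Real.exp (-t)) ≤ Real.log r :=
          Real.log_le_log (Real.exp_pos _) h2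
        rw [Real.log_exp] at this
        linarith
    rw [hT]
    have hB := partB κ c hlip hκ0 hκ1 h0 ht
    have hmax : max 0 (Real.log r) ≤ max 0 (Real.log R) :=
      max_le_max le_rfl (Real.log_le_log h0 hrR)
    calc |K₀ x y + (∫ u in (0:ℝ)..t, κ (Real.exp u * r)) - min t (-Real.log r)|
        ≤ |K₀ x y| + |(∫ u in (0:ℝ)..t, κ (Real.exp u * r)) - min t (-Real.log r)| := by
          rw [add_sub_assoc]; exact abs_add_le _ _
      _ ≤ |M| + (c + max 0 (Real.log R)) := add_le_add hK (le_trans hB (by linarith))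
      _ ≤ |M| + c + max 0 (Real.log R) + 1 := by linarith
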